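/- Let μ, ν be probability measures on normed spaces X, Y; H : X → Y, G : Y → X measurable. Define for 1-Lipschitz φ, ψ the quantity D(φ,ψ) := (1/2)[∫φ dμ - ∫(φ∘G) dν + ∫ψ dν - ∫(ψ∘H) dμ]. Then for any coupling π of (μ,ν) and any 1-Lipschitz φ, ψ (with all integrands integrable), D(φ,ψ) ≤ ∫ (‖y - H x‖ + ‖G(y) - x‖) dπ(x,y). -/
import Mathlib


open MeasureTheory

/-- The averaged dual functional `D(φ,ψ)` is a lower bound for the transport cost
of any coupling `π` of `(μ, ν)`. -/
theorem dual_functional_le_transport_cost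
    {X Y : Type*} [NormedAddCommGroup X] [NormedSpace ℝ X] [MeasurableSpace X] [BorelSpace X]
    [NormedAddCommGroup Y] [NormedSpace ℝ Y] [MeasurableSpace Y] [BorelSpace Y]
    (μ : Measure X) (ν : Measure Y) [IsProbabilityMeasure μ] [IsProbabilityMeasure ν]
    (H : X → Y) (G : Y → X) (hH : Measurable H) (hG : Measurable G)
    (π : Measure (X × Y))
    (hπ1 : π.map Prod.fst = μ) (hπ2 : π.map Prod.snd = ν)
    (φ : X → ℝ) (hφ : LipschitzWith 1 φ)
    (ψ : Y → ℝ) (hψ : LipschitzWith 1 ψ)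
    (hφμ : Integrable φ μ) (hφG : Integrable (fun y => φ (G y)) ν)
    (hψν : Integrable ψ ν) (hψH : Integrable (fun x => ψ (H x)) μ)
    (hc : Integrable (fun p : X × Y => ‖p.2 - H p.1‖ + ‖G p.2 - p.1‖) π) :
    (1 / 2 : ℝ) * (∫ x, φ x ∂μ - ∫ y, φ (G y) ∂ν + ∫ y, ψ y ∂ν - ∫ x, ψ (H x) ∂μ) ≤
      ∫ p, (‖p.2 - H p.1‖ + ‖G p.2 - p.1‖) ∂π := by
  have hφm : Measurable φ := hφ.continuous.measurable
  have hψm : Measurable ψ := hψ.continuous.measurable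
  have hφGm : AEStronglyMeasurable (fun y => φ (G y)) (π.map Prod.snd) :=
    (hφm.comp hG).aestronglyMeasurable
  have hψHm : AEStronglyMeasurable (fun x => ψ (H x)) (π.map Prod.fst) :=
    (hψm.comp hH).aestronglyMeasurable
  -- transfer integrals to π
  have eφ : ∫ x, φ x ∂μ = ∫ p : X × Y, φ p.1 ∂π := by
    rw [← hπ1, integral_map measurable_fst.aemeasurable hφm.aestronglyMeasurable]
  have eφG : ∫ y, φ (G y) ∂ν = ∫ p : X × Y, φ (G p.2) ∂π := by
    rw [← hπ2, integral_map measurable_snd.aemeasurable hφGm]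
  have eψ : ∫ y, ψ y ∂ν = ∫ p : X × Y, ψ p.2 ∂π := by
    rw [← hπ2, integral_map measurable_snd.aemeasurable hψm.aestronglyMeasurable]
  have eψH : ∫ x, ψ (H x) ∂μ = ∫ p : X × Y, ψ (H p.1) ∂π := by
    rw [← hπ1, integral_map measurable_fst.aemeasurable hψHm]
  -- integrability under π
  have hφπ : Integrable (fun p : X × Y => φ p.1) π := by
    rw [← hπ1] at hφμ
    exact (integrable_map_measure hφm.aestronglyMeasurable measurable_fst.aemeasurable).mp hφμ
  have hφGπ : Integrable (fun p : X × Y => φ (G p.2)) π := by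
    rw [← hπ2] at hφG
    exact (integrable_map_measure hφGm measurable_snd.aemeasurable).mp hφG
  have hψπ : Integrable (fun p : X × Y => ψ p.2) π := by
    rw [← hπ2] at hψν
    exact (integrable_map_measure hψm.aestronglyMeasurable measurable_snd.aemeasurable).mp hψν
  have hψHπ : Integrable (fun p : X × Y => ψ (H p.1)) π := by
    rw [← hπ1] at hψH
    exact (integrable_map_measure hψHm measurable_fst.aemeasurable).mp hψH
  -- one-sided bounds, each against the full cost
  have A : ∫ x, φ x ∂μ - ∫ y, φ (G y) ∂ν ≤ ∫ p : X × Y, (‖p.2 - H p.1‖ + ‖G p.2 - p.1‖) ∂π := by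
    rw [eφ, eφG, ← integral_sub hφπ hφGπ]
    refine integral_mono_ae (hφπ.sub hφGπ) hc (ae_of_all _ fun p => ?_)
    have hd := hφ.dist_le_mul p.1 (G p.2)
    rw [Real.dist_eq] at hd
    have h := le_trans (le_abs_self _) hd
    have h1 : (0:ℝ) ≤ ‖p.2 - H p.1‖ := norm_nonneg _
    simp only [NNReal.coe_one, one_mul, dist_eq_norm, norm_sub_rev p.1] at h
    show φ p.1 - φ (G p.2) ≤ ‖p.2 - H p.1‖ + ‖G p.2 - p.1‖
    linarith
  have B : ∫ y, ψ y ∂ν - ∫ x, ψ (H x) ∂μ ≤ ∫ p : X × Y, (‖p.2 - H p.1‖ + ‖G p.2 - p.1‖) ∂π := by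
    rw [eψ, eψH, ← integral_sub hψπ hψHπ]
    refine integral_mono_ae (hψπ.sub hψHπ) hc (ae_of_all _ fun p => ?_)
    have hd := hψ.dist_le_mul p.2 (H p.1)
    rw [Real.dist_eq] at hd
    have h := le_trans (le_abs_self _) hd
    have h1 : (0:ℝ) ≤ ‖G p.2 - p.1‖ := norm_nonneg _
    simp only [NNReal.coe_one, one_mul, dist_eq_norm] at h
    show ψ p.2 - ψ (H p.1) ≤ ‖p.2 - H p.1‖ + ‖G p.2 - p.1‖
    linarith
  linarith
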